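/- For all k ≥ 1, the function f(d) = dk − (3/4)d² + d/2 + (1/4)·[d odd] over positive integers d attains its maximum at the integer nearest to (2k+1)/3, and this maximum value equals (k²+k+1)/3 if k ≡ 1 (mod 3) and (k²+k)/3 otherwise. Furthermore, the maximizing d satisfies d ≤ k+1. -/

import Mathlib

open SimpleGraph Finset

variable {V : Type*}

/-- Truncated graph distance `d_k(x,y) = min(d(x,y), k+1)`. -/
noncomputable def dk (G : SimpleGraph V) (k : ℕ) (x y : V) : ℕ := min (G.dist x y) (k + 1)

/-- `w` lies on a shortest path (in a tree: the unique path) between `x` and `y`. -/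
def OnPath (G : SimpleGraph V) (x y w : V) : Prop :=
  G.dist x w + G.dist w y = G.dist x y

/-- `S` is a threshold-`k` resolving set for `G`. -/
def ThresholdResolving (G : SimpleGraph V) (k : ℕ) (S : Set V) : Prop :=
  (∀ x y : V, x ≠ y → ∃ s ∈ S, dk G k s x ≠ dk G k s y) ∧
  (∀ x : V, ∃ s ∈ S, G.dist s x ≤ k)

/-- A sensor `s` directly measures `x`: `d(s,x) ≤ k` and no other sensor lies on the
path from `s` to `x`. -/
def DirectlyMeasures (G : SimpleGraph V) (k : ℕ) (S : Set V) (s x : V) : Prop :=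
  G.dist s x ≤ k ∧ ∀ t ∈ S, t ≠ s → ¬ OnPath G s x t

/-- The threshold-`k` metric dimension of a finite graph. -/
noncomputable def Tmd (G : SimpleGraph V) [Fintype V] (k : ℕ) : ℕ :=
  sInf {m | ∃ S : Finset V, ThresholdResolving G k ↑S ∧ S.card = m}

/-- The path between the sensors `s₁ ≠ s₂` contains no other sensor. -/
def SensorPath (G : SimpleGraph V) (S : Set V) (s₁ s₂ : V) : Prop :=
  s₁ ≠ s₂ ∧ s₁ ∈ S ∧ s₂ ∈ S ∧ ∀ t ∈ S, OnPath G s₁ s₂ t → t = s₁ ∨ t = s₂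

/-- The edge `{a,b}` lies on the (tree-)path between `x` and `y`. -/
def EdgeOnPath (G : SimpleGraph V) (x y a b : V) : Prop :=
  G.Adj a b ∧ OnPath G x y a ∧ OnPath G x y b

/-- A leaf-path of length `ℓ` starting at `v`: an induced path `v = p 0, p 1, …, p ℓ`
with `deg v ≥ 3`, ending in a leaf, all internal vertices of degree 2. -/
def IsLeafPath (G : SimpleGraph V) [Fintype V] [DecidableRel G.Adj]
    (v : V) (ℓ : ℕ) (p : Fin (ℓ + 1) → V) : Prop :=
  Function.Injective p ∧ p 0 = v ∧ 3 ≤ G.degree v ∧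
  (∀ i : Fin ℓ, G.Adj (p i.castSucc) (p i.succ)) ∧
  G.degree (p (Fin.last ℓ)) = 1 ∧
  ∀ i : Fin (ℓ + 1), (i : ℕ) ≠ 0 → (i : ℕ) ≠ ℓ → G.degree (p i) = 2

/-- Upper complexity of a path of length `ℓ` (with `ℓ = q(3k+2)+r`). -/
def cbar (k ℓ : ℕ) : ℕ :=
  2 * (ℓ / (3 * k + 2)) + (if 1 ≤ ℓ % (3 * k + 2) then 1 else 0) +
    (if 2 * k + 2 ≤ ℓ % (3 * k + 2) then 1 else 0)

/-- Lower complexity of a path of length `ℓ` (with `ℓ = q(3k+2)+r`). -/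
def clow (k ℓ : ℕ) : ℕ :=
  2 * (ℓ / (3 * k + 2)) + (if k + 1 ≤ ℓ % (3 * k + 2) then 1 else 0) +
    (if 2 * k + 2 ≤ ℓ % (3 * k + 2) then 1 else 0)

/-- The type of a vertex `v` with respect to the sensor pair `(s, s')`. -/
noncomputable def typ (G : SimpleGraph V) (s s' v : V) : ℤ :=
  ((G.dist v s : ℤ) - (G.dist v s' : ℤ) + (G.dist s s' : ℤ)) / 2

/-- The attraction of the pair of sensors `{s, s'}`. -/
def PairAttraction (G : SimpleGraph V) (k : ℕ) (S : Set V) (s s' : V) : Set V :=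
  {x | x ∉ S ∧ DirectlyMeasures G k S s x ∧ DirectlyMeasures G k S s' x ∧
    (∀ t ∈ S, t ≠ s → t ≠ s' → ¬ DirectlyMeasures G k S t x) ∧
    ∀ y : V, y ≠ x → y ∉ S →
      (∀ t ∈ S, t ≠ s → t ≠ s' → ¬ DirectlyMeasures G k S t y) →
      dk G k s x ≠ dk G k s y ∨ dk G k s' x ≠ dk G k s' y}

/-- The subset of sensors `S' ⊆ S` minimally resolves the vertex `x`. -/
def MinimallyResolves (G : SimpleGraph V) (k : ℕ) (S S' : Set V) (x : V) : Prop :=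
  x ∉ S ∧ (∀ s ∈ S', G.dist s x ≤ k) ∧
  (∀ t ∈ S, t ∉ S' → ¬ DirectlyMeasures G k S t x) ∧
  (∀ y : V, y ≠ x → (∀ t ∈ S, t ∉ S' → ¬ DirectlyMeasures G k S t y) →
    ∃ s ∈ S', dk G k s x ≠ dk G k s y) ∧
  (∀ s ∈ S', DirectlyMeasures G k S s x)

/-- `f(d) = dk − (3/4)d² + d/2 + (1/4)[d odd]` is maximized over
positive integers at the integer nearest to `(2k+1)/3`, with the stated maximum,
and the maximizer is at most `k+1`. -/
theorem stmt18 (k : ℕ) (hk : 1 ≤ k) :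
    let f : ℕ → ℚ := fun d =>
      (d : ℚ) * k - 3 / 4 * (d : ℚ) ^ 2 + (d : ℚ) / 2 + (if Odd d then 1 / 4 else 0)
    let d₀ : ℕ := if k % 3 = 0 then 2 * k / 3 else
      if k % 3 = 1 then (2 * k + 1) / 3 else (2 * k + 2) / 3
    (∀ d : ℕ, 1 ≤ d → f d ≤ f d₀) ∧
    |(d₀ : ℚ) - (2 * (k : ℚ) + 1) / 3| ≤ 1 / 2 ∧
    f d₀ = (if k % 3 = 1 then ((k : ℚ) ^ 2 + k + 1) / 3 else ((k : ℚ) ^ 2 + k) / 3) ∧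
    d₀ ≤ k + 1 := by
  intro f d₀
  obtain ⟨m, r, hr, hk3⟩ : ∃ m r, r < 3 ∧ k = 3 * m + r :=
    ⟨k / 3, k % 3, Nat.mod_lt _ (by norm_num), (Nat.div_add_mod k 3).symm⟩
  interval_cases r
  · -- r = 0, d₀ = 2m
    subst hk3
    have hd0 : d₀ = 2 * m := by unfold d₀; split_ifs <;> omega
    have hmd0 : ¬ Odd (2 * m) := by rw [Nat.odd_iff]; omega
    refine ⟨?_, ?_, ?_, by omega⟩
    · intro d hd1
      simp only [f, hd0, if_neg hmd0]
      rcases Nat.even_or_odd d with he | ho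
      · rw [← Nat.not_odd_iff_even] at he
        rw [if_neg he]
        rcases le_or_gt d (2 * m) with h | h
        · have h1 : (d : ℚ) ≤ 2 * m := by exact_mod_cast h
          push_cast
          nlinarith [mul_nonneg (by linarith : (0:ℚ) ≤ 2 * m - d)
            (by linarith : (0:ℚ) ≤ 6 * m + 2 - 3 * d)]
        · have h1 : (2 * m : ℚ) + 1 ≤ d := by exact_mod_cast h
          push_cast
          nlinarith [mul_nonneg (by linarith : (0:ℚ) ≤ (d:ℚ) - 2 * m - 1)
            (by linarith : (0:ℚ) ≤ 3 * d - 6 * m - 2)]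
      · rw [if_pos ho]
        rcases lt_or_ge d (2 * m) with h | h
        · have h1 : (d : ℚ) + 1 ≤ 2 * m := by exact_mod_cast h
          push_cast
          nlinarith [mul_nonneg (by linarith : (0:ℚ) ≤ 2 * m - d - 1)
            (by linarith : (0:ℚ) ≤ 6 * m + 2 - 3 * d)]
        · have hne : d ≠ 2 * m := by rintro rfl; exact hmd0 ho
          have h2 : 2 * m + 1 ≤ d := by omega
          have h1 : (2 * m : ℚ) + 1 ≤ d := by exact_mod_cast h2
          push_cast
          nlinarith [mul_nonneg (by linarith : (0:ℚ) ≤ (d:ℚ) - 2 * m - 1)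
            (by linarith : (0:ℚ) ≤ 3 * d - 6 * m - 2)]
    · rw [hd0, abs_le]; push_cast; constructor <;> linarith
    · have hne : (3 * m + 0) % 3 ≠ 1 := by omega
      rw [if_neg hne]
      simp only [f, hd0, if_neg hmd0]
      push_cast; ring
  · -- r = 1, d₀ = 2m+1
    subst hk3
    have hd0 : d₀ = 2 * m + 1 := by unfold d₀; split_ifs <;> omega
    have hmd0 : Odd (2 * m + 1) := by rw [Nat.odd_iff]; omega
    refine ⟨?_, ?_, ?_, by omega⟩
    · intro d hd1
      simp only [f, hd0, if_pos hmd0]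
      rcases Nat.even_or_odd d with he | ho
      · rw [← Nat.not_odd_iff_even] at he
        rw [if_neg he]
        push_cast
        nlinarith [sq_nonneg ((d : ℚ) - 2 * m - 1)]
      · rw [if_pos ho]
        push_cast
        nlinarith [sq_nonneg ((d : ℚ) - 2 * m - 1)]
    · rw [hd0, abs_le]; push_cast; constructor <;> linarith
    · have hne : (3 * m + 1) % 3 = 1 := by omega
      rw [if_pos hne]
      simp only [f, hd0, if_pos hmd0]
      push_cast; ring
  · -- r = 2, d₀ = 2m+2
    subst hk3
    have hd0 : d₀ = 2 * m + 2 := by unfold d₀; split_ifs <;> omega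
    have hmd0 : ¬ Odd (2 * m + 2) := by rw [Nat.odd_iff]; omega
    refine ⟨?_, ?_, ?_, by omega⟩
    · intro d hd1
      simp only [f, hd0, if_neg hmd0]
      rcases Nat.even_or_odd d with he | ho
      · rw [← Nat.not_odd_iff_even] at he
        rw [if_neg he]
        rcases le_or_gt d (2 * m + 1) with h | h
        · have h1 : (d : ℚ) ≤ 2 * m + 1 := by exact_mod_cast h
          push_cast
          nlinarith [mul_nonneg (by linarith : (0:ℚ) ≤ 2 * m + 2 - d)
            (by linarith : (0:ℚ) ≤ 6 * m + 4 - 3 * d)]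
        · have h1 : (2 * m : ℚ) + 2 ≤ d := by exact_mod_cast h
          push_cast
          nlinarith [mul_nonneg (by linarith : (0:ℚ) ≤ (d:ℚ) - 2 * m - 2)
            (by linarith : (0:ℚ) ≤ 3 * d - 6 * m - 4)]
      · rw [if_pos ho]
        rcases le_or_gt d (2 * m + 1) with h | h
        · have h1 : (d : ℚ) ≤ 2 * m + 1 := by exact_mod_cast h
          push_cast
          nlinarith [mul_nonneg (by linarith : (0:ℚ) ≤ 2 * m + 1 - d)
            (by linarith : (0:ℚ) ≤ 6 * m + 4 - 3 * d)]
        · have hne : d ≠ 2 * m + 2 := by rintro rfl; exact hmd0 ho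
          have h2 : 2 * m + 3 ≤ d := by omega
          have h1 : (2 * m : ℚ) + 3 ≤ d := by exact_mod_cast h2
          push_cast
          nlinarith [mul_nonneg (by linarith : (0:ℚ) ≤ (d:ℚ) - 2 * m - 3)
            (by linarith : (0:ℚ) ≤ 3 * d - 6 * m - 4)]
    · rw [hd0, abs_le]; push_cast; constructor <;> linarith
    · have hne : (3 * m + 2) % 3 ≠ 1 := by omega
      rw [if_neg hne]
      simp only [f, hd0, if_neg hmd0]
      push_cast; ring
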